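/- (Gamma-ratio bound for linearly increasing polynomial degrees). Let c ∈ (0,1) and x > 0 be fixed. Then there exists a constant C > 0 (depending only on c and x) such that for every integer p ≥ 1, setting q = c p (a real number), Γ(p−q+1)/Γ(p+q+1) · x^{2q} · Γ(q+1)² ≤ C p · ( (x c)^{2c} (1−c)^{1−c} / (1+c)^{1+c} )^p. -/

import Mathlib

open Real

open Nat Filter

lemma stirlingSeq_ge (n : ℕ) : Real.sqrt π ≤ Stirling.stirlingSeq (n+1) :=
  Stirling.stirlingSeq'_antitone.le_of_tendsto
    (Stirling.tendsto_stirlingSeq_sqrt_pi.comp (tendsto_add_atTop_nat 1)) n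

lemma fact_le_stirling (n : ℕ) (hn : 1 ≤ n) :
    (n ! : ℝ) ≤ exp 1 * Real.sqrt n * (n / exp 1) ^ n := by
  obtain ⟨m, rfl⟩ := Nat.exists_eq_add_of_le hn
  have h1 : Stirling.stirlingSeq (1 + m) ≤ Stirling.stirlingSeq 1 := by
    have := Stirling.stirlingSeq'_antitone (Nat.zero_le m)
    simpa [Nat.succ_eq_add_one, add_comm] using this
  rw [Stirling.stirlingSeq_one] at h1
  have hpos : (0:ℝ) < Real.sqrt (2 * (1+m:ℕ) : ℝ) * ((1+m:ℕ) / exp 1 : ℝ) ^ (1+m) := by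
    positivity
  have h2 : ((1+m)! : ℝ) / (Real.sqrt (2 * (1+m:ℕ) : ℝ) * ((1+m:ℕ) / exp 1 : ℝ) ^ (1+m)) ≤ exp 1 / Real.sqrt 2 := h1
  have := (div_le_iff₀ hpos).mp h2
  calc ((1+m)! : ℝ) ≤ exp 1 / Real.sqrt 2 * (Real.sqrt (2 * (1+m:ℕ) : ℝ) * ((1+m:ℕ)/exp 1)^(1+m)) := this
    _ = exp 1 * Real.sqrt (1+m:ℕ) * ((1+m:ℕ)/exp 1)^(1+m) := by
        rw [show (2 * (1+m:ℕ) : ℝ) = 2 * ((1+m:ℕ):ℝ) by push_cast; ring,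
          Real.sqrt_mul (by norm_num)]
        field_simp

lemma stirling_le_fact (n : ℕ) (hn : 1 ≤ n) :
    Real.sqrt π * Real.sqrt (2 * n : ℝ) * ((n:ℝ) / exp 1) ^ n ≤ (n ! : ℝ) := by
  obtain ⟨m, rfl⟩ := Nat.exists_eq_add_of_le hn
  have h1 := stirlingSeq_ge m
  rw [Stirling.stirlingSeq] at h1
  have hpos : (0:ℝ) < Real.sqrt (2 * (m+1:ℕ) : ℝ) * ((m+1:ℕ) / exp 1 : ℝ) ^ (m+1) := by
    positivity
  have := (le_div_iff₀ hpos).mp h1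
  simpa [add_comm, mul_assoc] using this

lemma gamma_interp_upper (n : ℕ) {θ : ℝ} (h0 : 0 ≤ θ) (h1 : θ ≤ 1) :
    Real.Gamma ((n:ℝ) + 1 + θ) ≤ (n ! : ℝ) * ((n:ℝ) + 1) ^ θ := by
  have hg1 : Real.Gamma ((n:ℝ) + 1) = (n ! : ℝ) := Real.Gamma_nat_eq_factorial n
  have hg2 : Real.Gamma ((n:ℝ) + 2) = ((n+1)! : ℝ) := by
    have := Real.Gamma_nat_eq_factorial (n+1)
    push_cast at this ⊢; rw [show (n:ℝ) + 2 = n + 1 + 1 by ring]; exact_mod_cast this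
  have hfpos : (0:ℝ) < n ! := by positivity
  rcases eq_or_lt_of_le h0 with rfl | h0'
  · simp [hg1]
  rcases eq_or_lt_of_le h1 with rfl | h1'
  · rw [show (n:ℝ) + 1 + 1 = (n:ℝ) + 2 by ring, hg2, Real.rpow_one]
    push_cast [Nat.factorial_succ]; ring_nf; rfl
  have key := Real.Gamma_mul_add_mul_le_rpow_Gamma_mul_rpow_Gamma
    (s := (n:ℝ)+1) (t := (n:ℝ)+2) (a := 1-θ) (b := θ)
    (by positivity) (by positivity) (by linarith) h0' (by ring)
  have harg : (1-θ) * ((n:ℝ)+1) + θ * ((n:ℝ)+2) = (n:ℝ) + 1 + θ := by ring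
  rw [harg, hg1, hg2] at key
  calc Real.Gamma ((n:ℝ)+1+θ) ≤ (n ! : ℝ) ^ (1-θ) * ((n+1)! : ℝ) ^ θ := key
    _ = (n ! : ℝ) * ((n:ℝ)+1) ^ θ := by
        rw [show ((n+1)! : ℝ) = ((n:ℝ)+1) * (n ! : ℝ) by push_cast [Nat.factorial_succ]; ring,
          Real.mul_rpow (by positivity) (by positivity), ← mul_assoc,
          mul_comm ((n ! : ℝ) ^ (1-θ)) (((n:ℝ)+1) ^ θ), mul_assoc,
          ← Real.rpow_add hfpos]
        norm_num; ring

lemma gamma_interp_lower (n : ℕ) {θ : ℝ} (h0 : 0 ≤ θ) (h1 : θ ≤ 1) :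
    ((n+1)! : ℝ) ≤ Real.Gamma ((n:ℝ) + 1 + θ) * ((n:ℝ) + 1 + θ) ^ (1 - θ) := by
  have hg1 : Real.Gamma ((n:ℝ) + 1) = (n ! : ℝ) := Real.Gamma_nat_eq_factorial n
  have hg2 : Real.Gamma ((n:ℝ) + 2) = ((n+1)! : ℝ) := by
    have := Real.Gamma_nat_eq_factorial (n+1)
    push_cast at this ⊢; rw [show (n:ℝ) + 2 = n + 1 + 1 by ring]; exact_mod_cast this
  have hapos : (0:ℝ) < (n:ℝ) + 1 + θ := by positivity
  have hgpos : 0 < Real.Gamma ((n:ℝ) + 1 + θ) := Real.Gamma_pos_of_pos hapos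
  rcases eq_or_lt_of_le h0 with rfl | h0'
  · rw [add_zero, hg1, sub_zero, Real.rpow_one]
    push_cast [Nat.factorial_succ]; ring_nf; rfl
  rcases eq_or_lt_of_le h1 with rfl | h1'
  · rw [show (n:ℝ) + 1 + 1 = (n:ℝ) + 2 by ring, hg2]; norm_num
  have key := Real.Gamma_mul_add_mul_le_rpow_Gamma_mul_rpow_Gamma
    (s := (n:ℝ)+1+θ) (t := (n:ℝ)+2+θ) (a := θ) (b := 1-θ)
    hapos (by positivity) h0' (by linarith) (by ring)
  have harg : θ * ((n:ℝ)+1+θ) + (1-θ) * ((n:ℝ)+2+θ) = (n:ℝ) + 2 := by ring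
  have hshift : Real.Gamma ((n:ℝ)+2+θ) = ((n:ℝ)+1+θ) * Real.Gamma ((n:ℝ)+1+θ) := by
    rw [show (n:ℝ)+2+θ = ((n:ℝ)+1+θ) + 1 by ring, Real.Gamma_add_one (ne_of_gt hapos)]
  rw [harg, hg2, hshift] at key
  calc ((n+1)! : ℝ) ≤ Real.Gamma ((n:ℝ)+1+θ) ^ θ * (((n:ℝ)+1+θ) * Real.Gamma ((n:ℝ)+1+θ)) ^ (1-θ) := key
    _ = Real.Gamma ((n:ℝ)+1+θ) * ((n:ℝ)+1+θ) ^ (1-θ) := by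
        rw [Real.mul_rpow (le_of_lt hapos) (le_of_lt hgpos), ← mul_assoc,
          mul_comm (Real.Gamma ((n:ℝ)+1+θ) ^ θ), mul_assoc, ← Real.rpow_add hgpos]
        norm_num; ring

lemma pow_div_exp (n : ℕ) : ((n:ℝ) / exp 1) ^ n = (n:ℝ) ^ n * exp (-(n:ℝ)) := by
  rw [div_pow, Real.exp_one_pow, div_eq_mul_inv, ← Real.exp_neg]

lemma stirling_upper_aux (n : ℕ) (hn : 1 ≤ n) {θ : ℝ} (h0 : 0 ≤ θ) (h1 : θ ≤ 1) :
    Real.Gamma ((n:ℝ) + θ + 1) ≤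
      15 * (Real.sqrt ((n:ℝ)+θ) * ((n:ℝ)+θ) ^ ((n:ℝ)+θ) * exp (-((n:ℝ)+θ))) := by
  have hn1 : (1:ℝ) ≤ (n:ℝ) := by exact_mod_cast hn
  have htpos : (0:ℝ) < (n:ℝ) + θ := by linarith
  have h1' : Real.Gamma ((n:ℝ)+θ+1) ≤ (n ! : ℝ) * ((n:ℝ)+1) ^ θ := by
    have := gamma_interp_upper n h0 h1
    rwa [show (n:ℝ)+1+θ = (n:ℝ)+θ+1 by ring] at this
  have h3 : ((n:ℝ)+1) ^ θ ≤ 2 * (((n:ℝ)+θ)^θ * exp (-θ) * exp 1) := by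
    have e1 : ((n:ℝ)+1) ^ θ ≤ (2*((n:ℝ)+θ)) ^ θ :=
      Real.rpow_le_rpow (by linarith) (by linarith) h0
    have e2 : (2*((n:ℝ)+θ)) ^ θ = 2 ^ θ * ((n:ℝ)+θ) ^ θ :=
      Real.mul_rpow (by norm_num) (le_of_lt htpos)
    have e3 : (2:ℝ) ^ θ ≤ 2 := by
      calc (2:ℝ) ^ θ ≤ 2 ^ (1:ℝ) := Real.rpow_le_rpow_of_exponent_le (by norm_num) h1
        _ = 2 := Real.rpow_one 2
    have e4 : (1:ℝ) ≤ exp (-θ) * exp 1 := by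
      rw [← Real.exp_add]
      have : (0:ℝ) ≤ -θ + 1 := by linarith
      calc (1:ℝ) = exp 0 := (Real.exp_zero).symm
        _ ≤ exp (-θ + 1) := Real.exp_le_exp.mpr this
    have hb : (0:ℝ) ≤ ((n:ℝ)+θ) ^ θ := Real.rpow_nonneg (le_of_lt htpos) θ
    calc ((n:ℝ)+1) ^ θ ≤ 2 ^ θ * ((n:ℝ)+θ) ^ θ := e1.trans (le_of_eq e2)
      _ ≤ 2 * ((n:ℝ)+θ) ^ θ := by nlinarith
      _ ≤ 2 * (((n:ℝ)+θ)^θ * exp (-θ) * exp 1) := by nlinarith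
  have h2 := fact_le_stirling n hn
  rw [pow_div_exp] at h2
  have key : (n ! : ℝ) * ((n:ℝ)+1) ^ θ ≤
      (exp 1 * Real.sqrt n * ((n:ℝ)^n * exp (-(n:ℝ)))) * (2 * (((n:ℝ)+θ)^θ * exp (-θ) * exp 1)) := by
    apply mul_le_mul h2 h3 (Real.rpow_nonneg (by positivity) θ) (by positivity)
  refine h1'.trans (key.trans ?_)
  have g1 : Real.sqrt n ≤ Real.sqrt ((n:ℝ)+θ) := Real.sqrt_le_sqrt (by linarith)
  have g2 : (n:ℝ)^n ≤ ((n:ℝ)+θ) ^ ((n:ℝ)) := by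
    rw [Real.rpow_natCast]
    exact pow_le_pow_left₀ (by positivity) (by linarith) n
  have g3 : ((n:ℝ)+θ) ^ ((n:ℝ)) * ((n:ℝ)+θ) ^ θ = ((n:ℝ)+θ) ^ ((n:ℝ)+θ) :=
    (Real.rpow_add htpos _ _).symm
  have g4 : exp (-(n:ℝ)) * exp (-θ) = exp (-((n:ℝ)+θ)) := by
    rw [← Real.exp_add]; ring_nf
  have he : exp 1 ≤ 2.7182818286 := le_of_lt Real.exp_one_lt_d9
  have hepos : (0:ℝ) < exp 1 := Real.exp_pos 1
  calc (exp 1 * Real.sqrt n * ((n:ℝ)^n * exp (-(n:ℝ)))) * (2 * (((n:ℝ)+θ)^θ * exp (-θ) * exp 1))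
      = (2 * exp 1 * exp 1) * (Real.sqrt n * ((n:ℝ)^n * ((n:ℝ)+θ)^θ * (exp (-(n:ℝ)) * exp (-θ)))) := by ring
    _ ≤ (2 * exp 1 * exp 1) * (Real.sqrt ((n:ℝ)+θ) * (((n:ℝ)+θ)^((n:ℝ)) * ((n:ℝ)+θ)^θ * (exp (-(n:ℝ)) * exp (-θ)))) := by
        have hθp : (0:ℝ) ≤ ((n:ℝ)+θ)^θ := Real.rpow_nonneg (le_of_lt htpos) θ
        have hexp : (0:ℝ) ≤ exp (-(n:ℝ)) * exp (-θ) := by positivity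
        apply mul_le_mul_of_nonneg_left _ (by positivity)
        apply mul_le_mul g1 _ (by positivity) (Real.sqrt_nonneg _)
        apply mul_le_mul_of_nonneg_right _ hexp
        exact mul_le_mul_of_nonneg_right g2 hθp
    _ = (2 * exp 1 * exp 1) * (Real.sqrt ((n:ℝ)+θ) * ((n:ℝ)+θ)^((n:ℝ)+θ) * exp (-((n:ℝ)+θ))) := by
        rw [← g3, ← g4]; ring
    _ ≤ 15 * (Real.sqrt ((n:ℝ)+θ) * ((n:ℝ)+θ)^((n:ℝ)+θ) * exp (-((n:ℝ)+θ))) := by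
        apply mul_le_mul_of_nonneg_right _ (by positivity)
        nlinarith

lemma stirling_lower_aux (n : ℕ) (hn : 1 ≤ n) {θ : ℝ} (h0 : 0 ≤ θ) (h1 : θ ≤ 1) :
    (1/2) * (Real.sqrt ((n:ℝ)+θ) * ((n:ℝ)+θ) ^ ((n:ℝ)+θ) * exp (-((n:ℝ)+θ))) ≤
      Real.Gamma ((n:ℝ) + θ + 1) := by
  have hn1 : (1:ℝ) ≤ (n:ℝ) := by exact_mod_cast hn
  have htpos : (0:ℝ) < (n:ℝ) + θ := by linarith
  have hBpos : (0:ℝ) < ((n:ℝ) + 1 + θ) ^ (1 - θ) := Real.rpow_pos_of_pos (by linarith) _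
  rw [show (n:ℝ) + θ + 1 = (n:ℝ) + 1 + θ by ring]
  have hinterp := gamma_interp_lower n h0 h1
  -- it suffices to bound LHS * B ≤ (n+1)!
  have S : (1/2) * (Real.sqrt ((n:ℝ)+θ) * ((n:ℝ)+θ) ^ ((n:ℝ)+θ) * exp (-((n:ℝ)+θ))) *
      ((n:ℝ) + 1 + θ) ^ (1 - θ) ≤ ((n+1)! : ℝ) := by
    have hsf := stirling_le_fact (n+1) (by omega)
    rw [pow_div_exp] at hsf
    have hc1 : ((n+1:ℕ):ℝ) = (n:ℝ) + 1 := by push_cast; ring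
    rw [hc1] at hsf
    have f1 : Real.sqrt ((n:ℝ)+θ) ≤ (3/4) * Real.sqrt (2 * ((n:ℝ)+1)) := by
      have key : Real.sqrt ((n:ℝ)+θ) ≤ Real.sqrt ((3/4)^2 * (2*((n:ℝ)+1))) :=
        Real.sqrt_le_sqrt (by nlinarith)
      rwa [Real.sqrt_mul (by positivity), Real.sqrt_sq (by norm_num)] at key
    have f2 : ((n:ℝ)+θ) ^ ((n:ℝ)+θ) ≤ ((n:ℝ)+1) ^ ((n:ℝ)+θ) :=
      Real.rpow_le_rpow (le_of_lt htpos) (by linarith) (by linarith)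
    have f3 : ((n:ℝ)+1+θ) ^ (1-θ) ≤ (3/2) * ((n:ℝ)+1) ^ (1-θ) := by
      have e1 : ((n:ℝ)+1+θ) ^ (1-θ) ≤ ((3/2) * ((n:ℝ)+1)) ^ (1-θ) :=
        Real.rpow_le_rpow (by linarith) (by linarith) (by linarith)
      have e2 : ((3/2:ℝ) * ((n:ℝ)+1)) ^ (1-θ) = (3/2:ℝ)^(1-θ) * ((n:ℝ)+1) ^ (1-θ) :=
        Real.mul_rpow (by norm_num) (by linarith)
      have e3 : (3/2:ℝ) ^ (1-θ) ≤ 3/2 := by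
        calc (3/2:ℝ) ^ (1-θ) ≤ (3/2:ℝ) ^ (1:ℝ) :=
              Real.rpow_le_rpow_of_exponent_le (by norm_num) (by linarith)
          _ = 3/2 := Real.rpow_one _
      have hb : (0:ℝ) ≤ ((n:ℝ)+1) ^ (1-θ) := Real.rpow_nonneg (by linarith) _
      calc ((n:ℝ)+1+θ) ^ (1-θ) ≤ (3/2:ℝ)^(1-θ) * ((n:ℝ)+1) ^ (1-θ) := e1.trans (le_of_eq e2)
        _ ≤ (3/2) * ((n:ℝ)+1) ^ (1-θ) := by nlinarith
    have f4 : exp (-((n:ℝ)+θ)) ≤ exp 1 * exp (-((n:ℝ)+1)) := by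
      rw [← Real.exp_add]
      exact Real.exp_le_exp.mpr (by linarith)
    have g1 : ((n:ℝ)+1) ^ ((n:ℝ)+θ) * ((n:ℝ)+1) ^ (1-θ) = ((n:ℝ)+1) ^ (n+1 : ℕ) := by
      rw [← Real.rpow_add (by linarith), ← Real.rpow_natCast ((n:ℝ)+1) (n+1)]
      congr 1; push_cast; ring
    have hsqnn : (0:ℝ) ≤ Real.sqrt (2 * ((n:ℝ)+1)) := Real.sqrt_nonneg _
    have hpownn : (0:ℝ) ≤ ((n:ℝ)+1) ^ ((n:ℝ)+θ) := Real.rpow_nonneg (by linarith) _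
    have hpownn2 : (0:ℝ) ≤ ((n:ℝ)+1) ^ (1-θ) := Real.rpow_nonneg (by linarith) _
    have hexpnn : (0:ℝ) ≤ exp (-((n:ℝ)+θ)) := (Real.exp_pos _).le
    have hsqt : (0:ℝ) ≤ Real.sqrt ((n:ℝ)+θ) := Real.sqrt_nonneg _
    have hpowt : (0:ℝ) ≤ ((n:ℝ)+θ) ^ ((n:ℝ)+θ) := Real.rpow_nonneg htpos.le _
    have step : (1/2) * (Real.sqrt ((n:ℝ)+θ) * ((n:ℝ)+θ) ^ ((n:ℝ)+θ) * exp (-((n:ℝ)+θ))) *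
        ((n:ℝ) + 1 + θ) ^ (1 - θ) ≤
        (1/2) * (((3/4) * Real.sqrt (2 * ((n:ℝ)+1))) * (((n:ℝ)+1) ^ ((n:ℝ)+θ)) *
          (exp 1 * exp (-((n:ℝ)+1)))) * ((3/2) * ((n:ℝ)+1) ^ (1-θ)) := by
      have inner : Real.sqrt ((n:ℝ)+θ) * ((n:ℝ)+θ) ^ ((n:ℝ)+θ) * exp (-((n:ℝ)+θ)) ≤
          ((3/4) * Real.sqrt (2 * ((n:ℝ)+1))) * (((n:ℝ)+1) ^ ((n:ℝ)+θ)) *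
            (exp 1 * exp (-((n:ℝ)+1))) :=
        mul_le_mul (mul_le_mul f1 f2 hpowt (by positivity)) f4 hexpnn (by positivity)
      exact mul_le_mul (mul_le_mul_of_nonneg_left inner (by norm_num)) f3
        (le_of_lt hBpos) (by positivity)
    refine step.trans ?_
    have const : (9:ℝ)/16 * exp 1 ≤ Real.sqrt π := by
      have h1 : (1.53:ℝ) ≤ Real.sqrt π := by
        rw [show (1.53:ℝ) = Real.sqrt (1.53^2) by rw [Real.sqrt_sq (by norm_num)]]
        exact Real.sqrt_le_sqrt (by nlinarith [Real.pi_gt_d6])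
      nlinarith [Real.exp_one_lt_d9]
    calc (1/2) * (((3/4) * Real.sqrt (2 * ((n:ℝ)+1))) * (((n:ℝ)+1) ^ ((n:ℝ)+θ)) *
          (exp 1 * exp (-((n:ℝ)+1)))) * ((3/2) * ((n:ℝ)+1) ^ (1-θ))
        = ((9/16) * exp 1) * (Real.sqrt (2 * ((n:ℝ)+1)) *
            (((n:ℝ)+1) ^ ((n:ℝ)+θ) * ((n:ℝ)+1) ^ (1-θ)) * exp (-((n:ℝ)+1))) := by ring
      _ = ((9/16) * exp 1) * (Real.sqrt (2 * ((n:ℝ)+1)) * ((n:ℝ)+1) ^ (n+1:ℕ) * exp (-((n:ℝ)+1))) := by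
          rw [g1]
      _ ≤ Real.sqrt π * (Real.sqrt (2 * ((n:ℝ)+1)) * ((n:ℝ)+1) ^ (n+1:ℕ) * exp (-((n:ℝ)+1))) := by
          apply mul_le_mul_of_nonneg_right const (by positivity)
      _ ≤ ((n+1)! : ℝ) := by
          refine le_trans (le_of_eq ?_) hsf
          push_cast; ring
  exact le_of_mul_le_mul_right (S.trans hinterp) hBpos

lemma stirling_upper (t : ℝ) (ht : 1 ≤ t) :
    Real.Gamma (t + 1) ≤ 15 * (Real.sqrt t * t ^ t * exp (-t)) := by
  have ht0 : (0:ℝ) ≤ t := by linarith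
  have hn : 1 ≤ ⌊t⌋₊ := Nat.le_floor (by exact_mod_cast ht)
  have h0 : 0 ≤ t - (⌊t⌋₊:ℝ) := sub_nonneg.2 (Nat.floor_le ht0)
  have h1 : t - (⌊t⌋₊:ℝ) ≤ 1 := by
    have := Nat.lt_floor_add_one t; linarith
  have := stirling_upper_aux ⌊t⌋₊ hn h0 h1
  rwa [show (⌊t⌋₊:ℝ) + (t - (⌊t⌋₊:ℝ)) = t by ring] at this

lemma stirling_lower (t : ℝ) (ht : 1 ≤ t) :
    (1/2) * (Real.sqrt t * t ^ t * exp (-t)) ≤ Real.Gamma (t + 1) := by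
  have ht0 : (0:ℝ) ≤ t := by linarith
  have hn : 1 ≤ ⌊t⌋₊ := Nat.le_floor (by exact_mod_cast ht)
  have h0 : 0 ≤ t - (⌊t⌋₊:ℝ) := sub_nonneg.2 (Nat.floor_le ht0)
  have h1 : t - (⌊t⌋₊:ℝ) ≤ 1 := by
    have := Nat.lt_floor_add_one t; linarith
  have := stirling_lower_aux ⌊t⌋₊ hn h0 h1
  rwa [show (⌊t⌋₊:ℝ) + (t - (⌊t⌋₊:ℝ)) = t by ring] at this

lemma gamma_ratio_key (a b : ℝ) (ha : 1 ≤ a) (hb : 1 ≤ b) :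
    Real.Gamma (a + 1) / Real.Gamma (a + 2*b + 1) * Real.Gamma (b + 1) ^ 2 ≤
      6750 * b * (a ^ a * (b ^ b) ^ 2 / (a + 2*b) ^ (a + 2*b)) := by
  have ha0 : (0:ℝ) < a := by linarith
  have hb0 : (0:ℝ) < b := by linarith
  have hs : (1:ℝ) ≤ a + 2*b := by linarith
  have hs0 : (0:ℝ) < a + 2*b := by linarith
  have hA := stirling_upper a ha
  have hB := stirling_upper b hb
  have hS := stirling_lower (a + 2*b) hs
  have hgs : 0 < Real.Gamma (a + 2*b + 1) := Real.Gamma_pos_of_pos (by linarith)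
  have hga : 0 < Real.Gamma (a + 1) := Real.Gamma_pos_of_pos (by linarith)
  have hgb : 0 < Real.Gamma (b + 1) := Real.Gamma_pos_of_pos (by linarith)
  have hSpos : (0:ℝ) < (1/2) * (Real.sqrt (a+2*b) * (a+2*b) ^ (a+2*b) * exp (-(a+2*b))) := by
    positivity
  have hsq : Real.Gamma (b+1) ^ 2 ≤ (15 * (Real.sqrt b * b ^ b * exp (-b))) ^ 2 := by
    apply pow_le_pow_left₀ hgb.le hB
  have num : Real.Gamma (a+1) * Real.Gamma (b+1) ^ 2 ≤
      15 * (Real.sqrt a * a ^ a * exp (-a)) * (15 * (Real.sqrt b * b ^ b * exp (-b))) ^ 2 :=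
    mul_le_mul hA hsq (sq_nonneg _) (by positivity)
  have div1 : Real.Gamma (a+1) * Real.Gamma (b+1) ^ 2 / Real.Gamma (a + 2*b + 1) ≤
      15 * (Real.sqrt a * a ^ a * exp (-a)) * (15 * (Real.sqrt b * b ^ b * exp (-b))) ^ 2 /
        ((1/2) * (Real.sqrt (a+2*b) * (a+2*b) ^ (a+2*b) * exp (-(a+2*b)))) :=
    div_le_div₀ (by positivity) num hSpos hS
  have eexp : exp (-a) * exp (-b) ^ 2 = exp (-(a+2*b)) := by
    rw [sq, ← Real.exp_add, ← Real.exp_add]; ring_nf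
  have esq : Real.sqrt b ^ 2 = b := Real.sq_sqrt hb0.le
  have expand : 15 * (Real.sqrt a * a ^ a * exp (-a)) * (15 * (Real.sqrt b * b ^ b * exp (-b))) ^ 2 /
        ((1/2) * (Real.sqrt (a+2*b) * (a+2*b) ^ (a+2*b) * exp (-(a+2*b)))) =
      6750 * ((Real.sqrt a / Real.sqrt (a+2*b)) * Real.sqrt b ^ 2 * (a ^ a * (b ^ b) ^ 2 / (a + 2*b) ^ (a + 2*b))) := by
    have h1 : Real.sqrt (a+2*b) ≠ 0 := by positivity
    have h2 : (a+2*b) ^ (a+2*b) ≠ 0 := by positivity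
    have h3 : exp (-(a+2*b)) ≠ 0 := (Real.exp_pos _).ne'
    field_simp
    rw [show -(a + b*2) = -(a+2*b) by ring, ← eexp]
    ring
  have hfrac : Real.sqrt a / Real.sqrt (a+2*b) ≤ 1 := by
    rw [div_le_one (by positivity)]
    exact Real.sqrt_le_sqrt (by linarith)
  calc Real.Gamma (a + 1) / Real.Gamma (a + 2*b + 1) * Real.Gamma (b + 1) ^ 2
      = Real.Gamma (a+1) * Real.Gamma (b+1) ^ 2 / Real.Gamma (a + 2*b + 1) := by ring
    _ ≤ 6750 * ((Real.sqrt a / Real.sqrt (a+2*b)) * Real.sqrt b ^ 2 * (a ^ a * (b ^ b) ^ 2 / (a + 2*b) ^ (a + 2*b))) :=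
        div1.trans (le_of_eq expand)
    _ = 6750 * ((Real.sqrt a / Real.sqrt (a+2*b)) * b * (a ^ a * (b ^ b) ^ 2 / (a + 2*b) ^ (a + 2*b))) := by
        rw [esq]
    _ ≤ 6750 * (1 * b * (a ^ a * (b ^ b) ^ 2 / (a + 2*b) ^ (a + 2*b))) := by
        apply mul_le_mul_of_nonneg_left _ (by norm_num)
        apply mul_le_mul_of_nonneg_right (mul_le_mul_of_nonneg_right hfrac hb0.le) (by positivity)
    _ = 6750 * b * (a ^ a * (b ^ b) ^ 2 / (a + 2*b) ^ (a + 2*b)) := by ring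

lemma prod_eq (c x P : ℝ) (hc0 : 0 < c) (hc1 : c < 1) (hx : 0 < x) (hP : 0 < P) :
    (((1-c)*P) ^ ((1-c)*P) * ((c*P) ^ (c*P)) ^ 2 / ((1+c)*P) ^ ((1+c)*P)) * x ^ (2*(c*P)) =
      ((x*c) ^ (2*c) * (1-c) ^ (1-c) / (1+c) ^ (1+c)) ^ P := by
  have h1c : (0:ℝ) < 1 - c := by linarith
  have h1c' : (0:ℝ) < 1 + c := by linarith
  have hxc : (0:ℝ) < x * c := by positivity
  have hbase : (0:ℝ) < (x*c) ^ (2*c) * (1-c) ^ (1-c) / (1+c) ^ (1+c) := by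
    apply div_pos (mul_pos (Real.rpow_pos_of_pos hxc _) (Real.rpow_pos_of_pos h1c _))
      (Real.rpow_pos_of_pos h1c' _)
  have l1 : ((1-c)*P) ^ ((1-c)*P) = exp ((Real.log (1-c) + Real.log P) * ((1-c)*P)) := by
    rw [Real.rpow_def_of_pos (by positivity), Real.log_mul h1c.ne' hP.ne']
  have l2 : ((c*P)) ^ ((c*P)) = exp ((Real.log c + Real.log P) * (c*P)) := by
    rw [Real.rpow_def_of_pos (by positivity), Real.log_mul hc0.ne' hP.ne']
  have l3 : ((1+c)*P) ^ ((1+c)*P) = exp ((Real.log (1+c) + Real.log P) * ((1+c)*P)) := by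
    rw [Real.rpow_def_of_pos (by positivity), Real.log_mul h1c'.ne' hP.ne']
  have l4 : x ^ (2*(c*P)) = exp (Real.log x * (2*(c*P))) := by
    rw [Real.rpow_def_of_pos hx]
  have l5 : ((x*c) ^ (2*c) * (1-c) ^ (1-c) / (1+c) ^ (1+c)) ^ P =
      exp (((Real.log x + Real.log c) * (2*c) + Real.log (1-c) * (1-c) -
        Real.log (1+c) * (1+c)) * P) := by
    rw [Real.rpow_def_of_pos hbase, Real.log_div (by positivity) (by positivity),
      Real.log_mul (by positivity) (by positivity),
      Real.log_rpow hxc, Real.log_rpow h1c, Real.log_rpow h1c',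
      Real.log_mul hx.ne' hc0.ne']
    ring_nf
  rw [l1, l2, l3, l4, l5, sq, ← Real.exp_add, ← Real.exp_add, ← Real.exp_sub, ← Real.exp_add]
  congr 1
  ring

/-- Gamma-ratio bound for linearly increasing polynomial degrees: for fixed `c ∈ (0,1)`
and `x > 0` there is `C > 0` such that for every integer `p ≥ 1`, with `q = c p`,
`Γ(p-q+1)/Γ(p+q+1) · x^{2q} · Γ(q+1)² ≤ C p ((xc)^{2c}(1-c)^{1-c}/(1+c)^{1+c})^p`. -/
theorem gamma_ratio_bound (c x : ℝ) (hc0 : 0 < c) (hc1 : c < 1) (hx : 0 < x) :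
    ∃ C : ℝ, 0 < C ∧ ∀ p : ℕ, 1 ≤ p →
      Real.Gamma ((p : ℝ) - c * p + 1) / Real.Gamma ((p : ℝ) + c * p + 1) *
          x ^ (2 * (c * p)) * Real.Gamma (c * p + 1) ^ 2 ≤
        C * (p : ℝ) *
          ((x * c) ^ (2 * c) * (1 - c) ^ (1 - c) / (1 + c) ^ (1 + c)) ^ (p : ℝ) := by
  have h1c : (0:ℝ) < 1 - c := by linarith
  have h1c' : (0:ℝ) < 1 + c := by linarith
  set ρ : ℝ := (x * c) ^ (2 * c) * (1 - c) ^ (1 - c) / (1 + c) ^ (1 + c) with hρdef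
  have hρ : 0 < ρ := by
    apply div_pos (mul_pos (Real.rpow_pos_of_pos (by positivity) _)
      (Real.rpow_pos_of_pos h1c _)) (Real.rpow_pos_of_pos h1c' _)
  set F : ℕ → ℝ := fun k =>
    Real.Gamma ((k : ℝ) - c * k + 1) / Real.Gamma ((k : ℝ) + c * k + 1) *
      x ^ (2 * (c * k)) * Real.Gamma (c * k + 1) ^ 2 with hFdef
  have hFnn : ∀ k : ℕ, 0 ≤ F k := by
    intro k
    have hk0 : (0:ℝ) ≤ (k:ℝ) := Nat.cast_nonneg k
    have g1 : 0 < Real.Gamma ((k : ℝ) - c * k + 1) :=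
      Real.Gamma_pos_of_pos (by nlinarith)
    have g2 : 0 < Real.Gamma ((k : ℝ) + c * k + 1) :=
      Real.Gamma_pos_of_pos (by nlinarith)
    have g3 : (0:ℝ) ≤ x ^ (2 * (c * k)) := Real.rpow_nonneg hx.le _
    exact mul_nonneg (mul_nonneg (div_nonneg g1.le g2.le) g3) (sq_nonneg _)
  set N : ℕ := ⌈1/c⌉₊ + ⌈1/(1-c)⌉₊ with hNdef
  refine ⟨6750 + ∑ k ∈ Finset.range N, F k / ((k:ℝ) * ρ ^ (k:ℝ)), ?_, ?_⟩
  · have : 0 ≤ ∑ k ∈ Finset.range N, F k / ((k:ℝ) * ρ ^ (k:ℝ)) :=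
      Finset.sum_nonneg fun k _ => div_nonneg (hFnn k) (by positivity)
    linarith
  intro p hp
  have hp0 : (0:ℝ) < (p:ℝ) := by exact_mod_cast hp
  have hρp : (0:ℝ) < ρ ^ (p:ℝ) := Real.rpow_pos_of_pos hρ _
  have hsum_nn : 0 ≤ ∑ k ∈ Finset.range N, F k / ((k:ℝ) * ρ ^ (k:ℝ)) :=
    Finset.sum_nonneg fun k _ => div_nonneg (hFnn k) (by positivity)
  by_cases hpN : p < N
  · have hterm : F p / ((p:ℝ) * ρ ^ (p:ℝ)) ≤ ∑ k ∈ Finset.range N, F k / ((k:ℝ) * ρ ^ (k:ℝ)) :=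
      Finset.single_le_sum (f := fun k => F k / ((k:ℝ) * ρ ^ (k:ℝ)))
        (fun k _ => div_nonneg (hFnn k) (by positivity)) (Finset.mem_range.2 hpN)
    have hC : F p / ((p:ℝ) * ρ ^ (p:ℝ)) ≤
        6750 + ∑ k ∈ Finset.range N, F k / ((k:ℝ) * ρ ^ (k:ℝ)) := by linarith
    calc F p = F p / ((p:ℝ) * ρ ^ (p:ℝ)) * ((p:ℝ) * ρ ^ (p:ℝ)) := by
          field_simp
      _ ≤ (6750 + ∑ k ∈ Finset.range N, F k / ((k:ℝ) * ρ ^ (k:ℝ))) * ((p:ℝ) * ρ ^ (p:ℝ)) :=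
          mul_le_mul_of_nonneg_right hC (by positivity)
      _ = (6750 + ∑ k ∈ Finset.range N, F k / ((k:ℝ) * ρ ^ (k:ℝ))) * (p:ℝ) * ρ ^ (p:ℝ) := by
          ring
  · push_neg at hpN
    have h3 : (N:ℝ) ≤ (p:ℝ) := Nat.cast_le.mpr hpN
    have hcp : (1:ℝ) ≤ c * p := by
      have h1 : (1/c : ℝ) ≤ (⌈1/c⌉₊ : ℝ) := Nat.le_ceil _
      have h2 : ((⌈1/c⌉₊ : ℕ) : ℝ) ≤ (N : ℝ) := Nat.cast_le.mpr (by omega)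
      have h4 : (1/c : ℝ) ≤ (p:ℝ) := by linarith
      have := (div_le_iff₀ hc0).mp h4
      linarith
    have hcp' : (1:ℝ) ≤ (1-c) * p := by
      have h1 : (1/(1-c) : ℝ) ≤ (⌈1/(1-c)⌉₊ : ℝ) := Nat.le_ceil _
      have h2 : ((⌈1/(1-c)⌉₊ : ℕ) : ℝ) ≤ (N : ℝ) := Nat.cast_le.mpr (by omega)
      have h4 : (1/(1-c) : ℝ) ≤ (p:ℝ) := by linarith
      have := (div_le_iff₀ h1c).mp h4
      linarith
    have key := gamma_ratio_key ((1-c)*p) (c*p) hcp' hcp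
    have hs_eq : (1-c)*(p:ℝ) + 2*(c*(p:ℝ)) = (p:ℝ) + c*p := by ring
    have ha_eq : (p:ℝ) - c*p = (1-c)*(p:ℝ) := by ring
    rw [hs_eq] at key
    have hxp : (0:ℝ) ≤ x ^ (2*(c*(p:ℝ))) := Real.rpow_nonneg hx.le _
    have hpe := prod_eq c x (p:ℝ) hc0 hc1 hx hp0
    rw [show (1+c)*(p:ℝ) = (p:ℝ) + c*(p:ℝ) by ring] at hpe
    calc F p = (Real.Gamma ((1-c)*(p:ℝ) + 1) / Real.Gamma ((p:ℝ) + c*p + 1) *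
          Real.Gamma (c*(p:ℝ) + 1) ^ 2) * x ^ (2*(c*(p:ℝ))) := by
          rw [hFdef]; simp only []; rw [ha_eq]; ring
      _ ≤ (6750 * (c*(p:ℝ)) * (((1-c)*(p:ℝ)) ^ ((1-c)*(p:ℝ)) * ((c*(p:ℝ)) ^ (c*(p:ℝ))) ^ 2 /
            ((p:ℝ) + c*(p:ℝ)) ^ ((p:ℝ) + c*(p:ℝ)))) * x ^ (2*(c*(p:ℝ))) :=
          mul_le_mul_of_nonneg_right key hxp
      _ = 6750 * (c*(p:ℝ)) * ((((1-c)*(p:ℝ)) ^ ((1-c)*(p:ℝ)) * ((c*(p:ℝ)) ^ (c*(p:ℝ))) ^ 2 /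
            ((p:ℝ) + c*(p:ℝ)) ^ ((p:ℝ) + c*(p:ℝ))) * x ^ (2*(c*(p:ℝ)))) := by ring
      _ = 6750 * (c*(p:ℝ)) * ρ ^ (p:ℝ) := by rw [hpe]
      _ ≤ (6750 + ∑ k ∈ Finset.range N, F k / ((k:ℝ) * ρ ^ (k:ℝ))) * (p:ℝ) * ρ ^ (p:ℝ) := by
          have hle : 6750 * (c*(p:ℝ)) ≤ (6750 + ∑ k ∈ Finset.range N, F k / ((k:ℝ) * ρ ^ (k:ℝ))) * (p:ℝ) := by
            have : 6750 * (c*(p:ℝ)) ≤ 6750 * (p:ℝ) := by nlinarith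
            nlinarith
          exact mul_le_mul_of_nonneg_right hle hρp.le
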